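/- Let X₁ and X₂ be identically distributed real random variables with finite positive variance. Then (X₁,X₂) ∈ IC_0 if and only if the law of the random rearrangement of (X₁,X₂) is the product of the marginal laws, i.e. (μ_{(X₁,X₂)} + μ_{(X₂,X₁)})/2 = μ_{X₁} ⊗ μ_{X₂}, where μ_{(X₁,X₂)} denotes the joint law of (X₁,X₂) on ℝ² and μ_{X₁} the common marginal law. -/

import Mathlib

open MeasureTheory ProbabilityTheory

variable {Ω : Type*} [MeasurableSpace Ω]

noncomputable def cov (μ : Measure Ω) (X Y : Ω → ℝ) : ℝ :=
  ∫ ω, (X ω - ∫ a, X a ∂μ) * (Y ω - ∫ a, Y a ∂μ) ∂μ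

noncomputable def corr (μ : Measure Ω) (X Y : Ω → ℝ) : ℝ :=
  cov μ X Y / Real.sqrt (variance X μ * variance Y μ)

def Admissible (μ : Measure Ω) (X Y : Ω → ℝ) (g : ℝ → ℝ) : Prop :=
  Measurable g ∧ MemLp (g ∘ X) 2 μ ∧ MemLp (g ∘ Y) 2 μ ∧
    0 < variance (g ∘ X) μ ∧ 0 < variance (g ∘ Y) μ

def IC (μ : Measure Ω) (X Y : Ω → ℝ) (r : ℝ) : Prop :=
  corr μ X Y = r ∧ ∀ g : ℝ → ℝ, Admissible μ X Y g → corr μ (g ∘ X) (g ∘ Y) = r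

section Aux

variable {μ : Measure Ω}

lemma integrable_mul_of_memL2 {Y Z : Ω → ℝ} (hY : MemLp Y 2 μ) (hZ : MemLp Z 2 μ) :
    Integrable (fun ω => Y ω * Z ω) μ := by
  have h : (1 : ENNReal) / 1 = 1 / 2 + 1 / 2 := by
    rw [div_one, ENNReal.add_halves]
  have h2 : MemLp (Y • Z) 1 μ := hZ.smul hY (hpqr := ⟨by rw [inv_one, ENNReal.inv_two_add_inv_two]⟩)
  have h3 : (Y • Z) = fun ω => Y ω * Z ω := rfl
  rw [h3] at h2
  exact memLp_one_iff_integrable.mp h2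

noncomputable def covi (μ : Measure Ω) (Y Z : Ω → ℝ) : ℝ :=
  (∫ ω, Y ω * Z ω ∂μ) - (∫ ω, Y ω ∂μ) * (∫ ω, Z ω ∂μ)

lemma cov_eq_covi [IsProbabilityMeasure μ] {Y Z : Ω → ℝ}
    (hY : MemLp Y 2 μ) (hZ : MemLp Z 2 μ) : cov μ Y Z = covi μ Y Z := by
  have hYi : Integrable Y μ := hY.integrable one_le_two
  have hZi : Integrable Z μ := hZ.integrable one_le_two
  have hYZ : Integrable (fun ω => Y ω * Z ω) μ := integrable_mul_of_memL2 hY hZ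
  unfold cov
  set a := ∫ ω, Y ω ∂μ with ha
  set b := ∫ ω, Z ω ∂μ with hb
  have h1 : (fun ω => (Y ω - a) * (Z ω - b))
      = fun ω => Y ω * Z ω - (b * Y ω + (a * Z ω - a * b)) := by funext ω; ring
  have j1 : Integrable (fun ω => a * Z ω - a * b) μ := (hZi.const_mul a).sub (integrable_const _)
  have j2 : Integrable (fun ω => b * Y ω + (a * Z ω - a * b)) μ := (hYi.const_mul b).add j1
  have j3 : Integrable (fun ω => b * Y ω) μ := hYi.const_mul b
  have j4 : Integrable (fun ω => a * Z ω) μ := hZi.const_mul a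
  rw [h1, integral_sub hYZ j2, integral_add j3 j1, integral_sub j4 (integrable_const _),
      integral_const_mul, integral_const_mul, integral_const]
  simp only [covi, probReal_univ, measure_univ, ENNReal.toReal_one, one_smul, ← ha, ← hb]
  ring

lemma variance_eq_covi [IsProbabilityMeasure μ] {Y : Ω → ℝ} (hY : MemLp Y 2 μ) :
    variance Y μ = covi μ Y Y := by
  have h2 : (Y ^ 2 : Ω → ℝ) = fun ω => Y ω * Y ω := by funext ω; simp [pow_two]
  rw [variance_eq_sub hY, h2, covi, pow_two]

lemma covi_expand [IsProbabilityMeasure μ] {Y Y' Z Z' : Ω → ℝ}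
    (hY : MemLp Y 2 μ) (hY' : MemLp Y' 2 μ) (hZ : MemLp Z 2 μ) (hZ' : MemLp Z' 2 μ) (t : ℝ) :
    covi μ (fun ω => Y ω + t * Y' ω) (fun ω => Z ω + t * Z' ω)
      = covi μ Y Z + t * (covi μ Y Z' + covi μ Y' Z) + t ^ 2 * covi μ Y' Z' := by
  have i1 := integrable_mul_of_memL2 hY hZ
  have i2 := integrable_mul_of_memL2 hY hZ'
  have i3 := integrable_mul_of_memL2 hY' hZ
  have i4 := integrable_mul_of_memL2 hY' hZ'
  have hYi : Integrable Y μ := hY.integrable one_le_two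
  have hY'i : Integrable Y' μ := hY'.integrable one_le_two
  have hZi : Integrable Z μ := hZ.integrable one_le_two
  have hZ'i : Integrable Z' μ := hZ'.integrable one_le_two
  have e1 : (fun ω => (Y ω + t * Y' ω) * (Z ω + t * Z' ω))
      = fun ω => Y ω * Z ω + (t * (Y ω * Z' ω) + (t * (Y' ω * Z ω) + (t * t) * (Y' ω * Z' ω))) := by
    funext ω; ring
  have k4 : Integrable (fun ω => t * t * (Y' ω * Z' ω)) μ := i4.const_mul _
  have k3 : Integrable (fun ω => t * (Y' ω * Z ω)) μ := i3.const_mul _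
  have k2 : Integrable (fun ω => t * (Y ω * Z' ω)) μ := i2.const_mul _
  have k34 : Integrable (fun ω => t * (Y' ω * Z ω) + t * t * (Y' ω * Z' ω)) μ := k3.add k4
  have k234 : Integrable (fun ω => t * (Y ω * Z' ω) + (t * (Y' ω * Z ω) + t * t * (Y' ω * Z' ω))) μ := k2.add k34
  have kY : Integrable (fun ω => t * Y' ω) μ := hY'i.const_mul t
  have kZ : Integrable (fun ω => t * Z' ω) μ := hZ'i.const_mul t
  simp only [covi]
  rw [e1, integral_add i1 k234, integral_add k2 k34, integral_add k3 k4,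
      integral_const_mul, integral_const_mul, integral_const_mul,
      integral_add hYi kY, integral_add hZi kZ,
      integral_const_mul, integral_const_mul]
  ring

lemma quad_eventually_zero {a b c : ℝ} {s : Set ℝ} (hs : s.Finite)
    (h : ∀ ε : ℝ, ε ∉ s → a + b * ε + c * ε ^ 2 = 0) : a = 0 := by
  have hd : Dense sᶜ := hs.countable.dense_compl ℝ
  have hco : Continuous fun ε : ℝ => a + b * ε + c * ε ^ 2 := by continuity
  have heq : (fun ε : ℝ => a + b * ε + c * ε ^ 2) = fun _ => (0 : ℝ) :=
    hco.ext_on hd continuous_const fun x hx => h x hx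
  simpa using congrFun heq 0

lemma quad_roots_finite {a b c : ℝ} (hc : c ≠ 0) :
    {x : ℝ | a + b * x + c * x ^ 2 = 0}.Finite := by
  have hp : (Polynomial.C a + Polynomial.C b * Polynomial.X
      + Polynomial.C c * Polynomial.X ^ 2 : Polynomial ℝ) ≠ 0 := by
    intro h
    have h2 := congrArg (fun p => Polynomial.coeff p 2) h
    simp [Polynomial.coeff_add, Polynomial.coeff_C, Polynomial.coeff_C_mul,
      Polynomial.coeff_X, Polynomial.coeff_X_pow] at h2
    exact hc h2
  refine (Polynomial.finite_setOf_isRoot hp).subset fun x hx => ?_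
  simp only [Set.mem_setOf_eq] at hx ⊢
  show Polynomial.IsRoot _ x
  simp only [Polynomial.IsRoot, Polynomial.eval_add, Polynomial.eval_mul, Polynomial.eval_C,
    Polynomial.eval_X, Polynomial.eval_pow]
  linarith [hx]

end Aux
section Main

variable {μ : Measure Ω}

lemma covi_comp_eq_zero [IsProbabilityMeasure μ] {X₁ X₂ : Ω → ℝ}
    (hX₁m : Measurable X₁) (hX₂m : Measurable X₂)
    (hX₁2 : MemLp X₁ 2 μ) (hX₂2 : MemLp X₂ 2 μ)
    (hv₁ : 0 < variance X₁ μ) (hv₂ : 0 < variance X₂ μ)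
    (hIC : ∀ g : ℝ → ℝ, Admissible μ X₁ X₂ g → corr μ (g ∘ X₁) (g ∘ X₂) = 0)
    {f : ℝ → ℝ} (hf : Measurable f) {M : ℝ} (hM : ∀ x, |f x| ≤ M) :
    covi μ (fun ω => f (X₁ ω)) (fun ω => f (X₂ ω)) = 0 := by
  have hF₁2 : MemLp (fun ω => f (X₁ ω)) 2 μ :=
    MemLp.of_bound ((hf.comp hX₁m).aestronglyMeasurable) M
      (Filter.Eventually.of_forall fun ω => by
        simpa [Real.norm_eq_abs] using hM (X₁ ω))
  have hF₂2 : MemLp (fun ω => f (X₂ ω)) 2 μ :=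
    MemLp.of_bound ((hf.comp hX₂m).aestronglyMeasurable) M
      (Filter.Eventually.of_forall fun ω => by
        simpa [Real.norm_eq_abs] using hM (X₂ ω))
  have hXX₁ : covi μ X₁ X₁ = variance X₁ μ := (variance_eq_covi hX₁2).symm
  have hXX₂ : covi μ X₂ X₂ = variance X₂ μ := (variance_eq_covi hX₂2).symm
  set s₁ : Set ℝ := {ε : ℝ | covi μ (fun ω => f (X₁ ω)) (fun ω => f (X₁ ω))
      + (covi μ (fun ω => f (X₁ ω)) X₁ + covi μ X₁ (fun ω => f (X₁ ω))) * ε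
      + variance X₁ μ * ε ^ 2 = 0} with hs₁
  set s₂ : Set ℝ := {ε : ℝ | covi μ (fun ω => f (X₂ ω)) (fun ω => f (X₂ ω))
      + (covi μ (fun ω => f (X₂ ω)) X₂ + covi μ X₂ (fun ω => f (X₂ ω))) * ε
      + variance X₂ μ * ε ^ 2 = 0} with hs₂
  have hbad₁ : s₁.Finite := quad_roots_finite (ne_of_gt hv₁)
  have hbad₂ : s₂.Finite := quad_roots_finite (ne_of_gt hv₂)
  refine quad_eventually_zero
    (b := covi μ (fun ω => f (X₁ ω)) X₂ + covi μ X₁ (fun ω => f (X₂ ω)))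
    (c := covi μ X₁ X₂) ((hbad₁.union hbad₂)) fun ε hε => ?_
  have hε₁ : ε ∉ s₁ := fun h => hε (Set.mem_union_left _ h)
  have hε₂ : ε ∉ s₂ := fun h => hε (Set.mem_union_right _ h)
  set g : ℝ → ℝ := fun x => f x + ε * x with hgdef
  have hgm : Measurable g := hf.add (measurable_id.const_mul ε)
  have hg1 : MemLp (g ∘ X₁) 2 μ := hF₁2.add (hX₁2.const_mul ε)
  have hg2 : MemLp (g ∘ X₂) 2 μ := hF₂2.add (hX₂2.const_mul ε)
  have hvar1 : variance (g ∘ X₁) μ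
      = covi μ (fun ω => f (X₁ ω)) (fun ω => f (X₁ ω))
        + (covi μ (fun ω => f (X₁ ω)) X₁ + covi μ X₁ (fun ω => f (X₁ ω))) * ε
        + variance X₁ μ * ε ^ 2 := by
    have hx : variance (g ∘ X₁) μ
        = covi μ (fun ω => f (X₁ ω) + ε * X₁ ω) (fun ω => f (X₁ ω) + ε * X₁ ω) :=
      variance_eq_covi hg1
    rw [hx, covi_expand hF₁2 hX₁2 hF₁2 hX₁2 ε, hXX₁]
    ring
  have hvar2 : variance (g ∘ X₂) μ
      = covi μ (fun ω => f (X₂ ω)) (fun ω => f (X₂ ω))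
        + (covi μ (fun ω => f (X₂ ω)) X₂ + covi μ X₂ (fun ω => f (X₂ ω))) * ε
        + variance X₂ μ * ε ^ 2 := by
    have hx : variance (g ∘ X₂) μ
        = covi μ (fun ω => f (X₂ ω) + ε * X₂ ω) (fun ω => f (X₂ ω) + ε * X₂ ω) :=
      variance_eq_covi hg2
    rw [hx, covi_expand hF₂2 hX₂2 hF₂2 hX₂2 ε, hXX₂]
    ring
  have hpos1 : 0 < variance (g ∘ X₁) μ := by
    refine (variance_nonneg _ μ).lt_of_ne (Ne.symm fun h0 => hε₁ ?_)
    exact (hvar1.symm.trans h0 : _)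
  have hpos2 : 0 < variance (g ∘ X₂) μ := by
    refine (variance_nonneg _ μ).lt_of_ne (Ne.symm fun h0 => hε₂ ?_)
    exact (hvar2.symm.trans h0 : _)
  have hc := hIC g ⟨hgm, hg1, hg2, hpos1, hpos2⟩
  have hsq : Real.sqrt (variance (g ∘ X₁) μ * variance (g ∘ X₂) μ) ≠ 0 :=
    ne_of_gt (Real.sqrt_pos.mpr (mul_pos hpos1 hpos2))
  unfold corr at hc
  have hcov0 : cov μ (g ∘ X₁) (g ∘ X₂) = 0 := (div_eq_zero_iff.mp hc).resolve_right hsq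
  have hthis : covi μ (fun ω => f (X₁ ω) + ε * X₁ ω) (fun ω => f (X₂ ω) + ε * X₂ ω) = 0 :=
    (cov_eq_covi hg1 hg2).symm.trans hcov0
  rw [covi_expand hF₁2 hX₁2 hF₂2 hX₂2 ε] at hthis
  linear_combination hthis

lemma cov_comp_eq_zero_of_mix [IsProbabilityMeasure μ] {X₁ X₂ : Ω → ℝ}
    (hX₁m : Measurable X₁) (hX₂m : Measurable X₂)
    (hident : Measure.map X₁ μ = Measure.map X₂ μ)
    (hM : (2 : ENNReal)⁻¹ • Measure.map (fun ω => (X₁ ω, X₂ ω)) μ +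
          (2 : ENNReal)⁻¹ • Measure.map (fun ω => (X₂ ω, X₁ ω)) μ =
        (Measure.map X₁ μ).prod (Measure.map X₂ μ))
    {u : ℝ → ℝ} (hu : Measurable u)
    (hu1 : MemLp (fun ω => u (X₁ ω)) 2 μ) (hu2 : MemLp (fun ω => u (X₂ ω)) 2 μ) :
    cov μ (u ∘ X₁) (u ∘ X₂) = 0 := by
  haveI h1p : IsProbabilityMeasure (Measure.map X₁ μ) :=
    Measure.isProbabilityMeasure_map hX₁m.aemeasurable
  haveI h2p : IsProbabilityMeasure (Measure.map X₂ μ) :=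
    Measure.isProbabilityMeasure_map hX₂m.aemeasurable
  have hpair₁ : Measurable fun ω => (X₁ ω, X₂ ω) := hX₁m.prodMk hX₂m
  have hpair₂ : Measurable fun ω => (X₂ ω, X₁ ω) := hX₂m.prodMk hX₁m
  set m := ∫ ω, u (X₁ ω) ∂μ with hm
  have hm₂ : ∫ ω, u (X₂ ω) ∂μ = m := by
    rw [hm, ← integral_map hX₂m.aemeasurable hu.aestronglyMeasurable,
      ← hident, integral_map hX₁m.aemeasurable hu.aestronglyMeasurable]
  set F : ℝ × ℝ → ℝ := fun p => (u p.1 - m) * (u p.2 - m) with hFdef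
  have hFm : Measurable F :=
    ((hu.comp measurable_fst).sub measurable_const).mul
      ((hu.comp measurable_snd).sub measurable_const)
  have hint12 : Integrable (fun ω => F (X₁ ω, X₂ ω)) μ :=
    integrable_mul_of_memL2 (hu1.sub (memLp_const m)) (hu2.sub (memLp_const m))
  have hint21 : Integrable (fun ω => F (X₂ ω, X₁ ω)) μ :=
    integrable_mul_of_memL2 (hu2.sub (memLp_const m)) (hu1.sub (memLp_const m))
  have hJ1 : Integrable F (Measure.map (fun ω => (X₁ ω, X₂ ω)) μ) :=
    (integrable_map_measure hFm.aestronglyMeasurable hpair₁.aemeasurable).mpr hint12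
  have hJ2 : Integrable F (Measure.map (fun ω => (X₂ ω, X₁ ω)) μ) :=
    (integrable_map_measure hFm.aestronglyMeasurable hpair₂.aemeasurable).mpr hint21
  have hswap : ∫ p, F p ∂(Measure.map (fun ω => (X₂ ω, X₁ ω)) μ)
      = ∫ p, F p ∂(Measure.map (fun ω => (X₁ ω, X₂ ω)) μ) := by
    rw [integral_map hpair₂.aemeasurable hFm.aestronglyMeasurable,
      integral_map hpair₁.aemeasurable hFm.aestronglyMeasurable]
    exact integral_congr_ae (Filter.Eventually.of_forall fun ω => mul_comm _ _)
  have hmix : ∫ p, F p ∂((Measure.map X₁ μ).prod (Measure.map X₂ μ))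
      = ∫ p, F p ∂(Measure.map (fun ω => (X₁ ω, X₂ ω)) μ) := by
    rw [← hM, integral_add_measure (hJ1.smul_measure (by norm_num))
      (hJ2.smul_measure (by norm_num)), integral_smul_measure, integral_smul_measure, hswap]
    simp only [ENNReal.toReal_inv, ENNReal.toReal_ofNat, smul_eq_mul]
    ring
  have hprod : ∫ p, F p ∂((Measure.map X₁ μ).prod (Measure.map X₂ μ))
      = (∫ x, (u x - m) ∂(Measure.map X₁ μ)) * (∫ y, (u y - m) ∂(Measure.map X₂ μ)) :=
    integral_prod_mul (fun x => u x - m) (fun y => u y - m)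
  have hmean1 : ∫ x, (u x - m) ∂(Measure.map X₁ μ) = 0 := by
    rw [integral_map (f := fun x => u x - m) hX₁m.aemeasurable
        ((hu.sub measurable_const).aestronglyMeasurable),
      integral_sub (hu1.integrable one_le_two) (integrable_const m), integral_const]
    simp [hm]
  have hcov : cov μ (u ∘ X₁) (u ∘ X₂) = ∫ ω, F (X₁ ω, X₂ ω) ∂μ := by
    unfold cov
    simp only [Function.comp_apply]
    rw [hm₂]
  rw [hcov, ← integral_map hpair₁.aemeasurable hFm.aestronglyMeasurable,
    ← hmix, hprod, hmean1, zero_mul]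

end Main
theorem ic_zero_iff_rearrangement_indep
    (μ : Measure Ω) [IsProbabilityMeasure μ] (X₁ X₂ : Ω → ℝ)
    (hX₁m : Measurable X₁) (hX₂m : Measurable X₂)
    (hident : Measure.map X₁ μ = Measure.map X₂ μ)
    (hX₁2 : MemLp X₁ 2 μ) (hX₂2 : MemLp X₂ 2 μ)
    (hv₁ : 0 < variance X₁ μ) (hv₂ : 0 < variance X₂ μ) :
    IC μ X₁ X₂ 0 ↔
      (2 : ENNReal)⁻¹ • Measure.map (fun ω => (X₁ ω, X₂ ω)) μ +
          (2 : ENNReal)⁻¹ • Measure.map (fun ω => (X₂ ω, X₁ ω)) μ =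
        (Measure.map X₁ μ).prod (Measure.map X₂ μ) := by
  have hpair₁ : Measurable fun ω => (X₁ ω, X₂ ω) := hX₁m.prodMk hX₂m
  have hpair₂ : Measurable fun ω => (X₂ ω, X₁ ω) := hX₂m.prodMk hX₁m
  haveI h1p : IsProbabilityMeasure (Measure.map X₁ μ) :=
    Measure.isProbabilityMeasure_map hX₁m.aemeasurable
  haveI h2p : IsProbabilityMeasure (Measure.map X₂ μ) :=
    Measure.isProbabilityMeasure_map hX₂m.aemeasurable
  haveI hp₁ : IsProbabilityMeasure (Measure.map (fun ω => (X₁ ω, X₂ ω)) μ) :=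
    Measure.isProbabilityMeasure_map hpair₁.aemeasurable
  haveI hp₂ : IsProbabilityMeasure (Measure.map (fun ω => (X₂ ω, X₁ ω)) μ) :=
    Measure.isProbabilityMeasure_map hpair₂.aemeasurable
  constructor
  · rintro ⟨-, hIC2⟩
    haveI hfin : IsFiniteMeasure
        ((2 : ENNReal)⁻¹ • Measure.map (fun ω => (X₁ ω, X₂ ω)) μ +
          (2 : ENNReal)⁻¹ • Measure.map (fun ω => (X₂ ω, X₁ ω)) μ) := by
      constructor
      rw [Measure.add_apply, Measure.smul_apply, Measure.smul_apply,
        measure_univ, measure_univ]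
      simp [ENNReal.inv_two_add_inv_two]
    refine ext_of_generate_finite _ generateFrom_prod.symm isPiSystem_prod ?_ ?_
    · rintro _ ⟨A, hA, B, hB, rfl⟩
      simp only [Set.mem_setOf_eq] at hA hB
      set iA : ℝ → ℝ := A.indicator 1 with hiA
      set iB : ℝ → ℝ := B.indicator 1 with hiB
      have hiAm : Measurable iA := measurable_one.indicator hA
      have hiBm : Measurable iB := measurable_one.indicator hB
      have hiAb : ∀ x, |iA x| ≤ 1 := fun x => by
        by_cases h : x ∈ A <;> simp [hiA, Set.indicator_apply, h]
      have hiBb : ∀ x, |iB x| ≤ 1 := fun x => by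
        by_cases h : x ∈ B <;> simp [hiB, Set.indicator_apply, h]
      have hcomb : ∀ c : ℝ, covi μ (fun ω => iA (X₁ ω) + c * iB (X₁ ω))
          (fun ω => iA (X₂ ω) + c * iB (X₂ ω)) = 0 := by
        intro c
        have hfc : Measurable fun x => iA x + c * iB x := hiAm.add (hiBm.const_mul c)
        have hfb : ∀ x, |iA x + c * iB x| ≤ 1 + |c| := fun x =>
          (abs_add_le _ _).trans (by
            rw [abs_mul]
            have := hiAb x; have := hiBb x
            nlinarith [abs_nonneg c])
        exact covi_comp_eq_zero hX₁m hX₂m hX₁2 hX₂2 hv₁ hv₂ hIC2 hfc hfb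
      have hA₁ : MemLp (fun ω => iA (X₁ ω)) 2 μ :=
        MemLp.of_bound ((hiAm.comp hX₁m).aestronglyMeasurable) 1
          (Filter.Eventually.of_forall fun ω => by
            simpa [Real.norm_eq_abs] using hiAb (X₁ ω))
      have hA₂ : MemLp (fun ω => iA (X₂ ω)) 2 μ :=
        MemLp.of_bound ((hiAm.comp hX₂m).aestronglyMeasurable) 1
          (Filter.Eventually.of_forall fun ω => by
            simpa [Real.norm_eq_abs] using hiAb (X₂ ω))
      have hB₁ : MemLp (fun ω => iB (X₁ ω)) 2 μ :=
        MemLp.of_bound ((hiBm.comp hX₁m).aestronglyMeasurable) 1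
          (Filter.Eventually.of_forall fun ω => by
            simpa [Real.norm_eq_abs] using hiBb (X₁ ω))
      have hB₂ : MemLp (fun ω => iB (X₂ ω)) 2 μ :=
        MemLp.of_bound ((hiBm.comp hX₂m).aestronglyMeasurable) 1
          (Filter.Eventually.of_forall fun ω => by
            simpa [Real.norm_eq_abs] using hiBb (X₂ ω))
      have hexp : ∀ c : ℝ,
          covi μ (fun ω => iA (X₁ ω)) (fun ω => iA (X₂ ω))
            + c * (covi μ (fun ω => iA (X₁ ω)) (fun ω => iB (X₂ ω))
              + covi μ (fun ω => iB (X₁ ω)) (fun ω => iA (X₂ ω)))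
            + c ^ 2 * covi μ (fun ω => iB (X₁ ω)) (fun ω => iB (X₂ ω)) = 0 := fun c =>
        (covi_expand hA₁ hB₁ hA₂ hB₂ c).symm.trans (hcomb c)
      have hb0 : covi μ (fun ω => iA (X₁ ω)) (fun ω => iB (X₂ ω))
          + covi μ (fun ω => iB (X₁ ω)) (fun ω => iA (X₂ ω)) = 0 := by
        have h1 := hexp 1
        have h2 := hexp (-1)
        norm_num at h1 h2
        linarith
      have eAB : covi μ (fun ω => iA (X₁ ω)) (fun ω => iB (X₂ ω))
          = (μ (X₁ ⁻¹' A ∩ X₂ ⁻¹' B)).toReal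
            - (μ (X₁ ⁻¹' A)).toReal * (μ (X₂ ⁻¹' B)).toReal := by
        have e1 : (fun ω => iA (X₁ ω) * iB (X₂ ω))
            = (X₁ ⁻¹' A ∩ X₂ ⁻¹' B).indicator (1 : Ω → ℝ) := by
          funext ω
          by_cases h1 : X₁ ω ∈ A <;> by_cases h2 : X₂ ω ∈ B <;>
            simp [hiA, hiB, Set.indicator_apply, h1, h2]
        have e2 : (fun ω => iA (X₁ ω)) = (X₁ ⁻¹' A).indicator (1 : Ω → ℝ) := by
          funext ω; by_cases h1 : X₁ ω ∈ A <;> simp [hiA, Set.indicator_apply, h1]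
        have e3 : (fun ω => iB (X₂ ω)) = (X₂ ⁻¹' B).indicator (1 : Ω → ℝ) := by
          funext ω; by_cases h2 : X₂ ω ∈ B <;> simp [hiB, Set.indicator_apply, h2]
        rw [covi, e1, e2, e3, integral_indicator_one ((hX₁m hA).inter (hX₂m hB)),
          integral_indicator_one (hX₁m hA), integral_indicator_one (hX₂m hB)]; rfl
      have eBA : covi μ (fun ω => iB (X₁ ω)) (fun ω => iA (X₂ ω))
          = (μ (X₁ ⁻¹' B ∩ X₂ ⁻¹' A)).toReal
            - (μ (X₁ ⁻¹' B)).toReal * (μ (X₂ ⁻¹' A)).toReal := by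
        have e1 : (fun ω => iB (X₁ ω) * iA (X₂ ω))
            = (X₁ ⁻¹' B ∩ X₂ ⁻¹' A).indicator (1 : Ω → ℝ) := by
          funext ω
          by_cases h1 : X₁ ω ∈ B <;> by_cases h2 : X₂ ω ∈ A <;>
            simp [hiA, hiB, Set.indicator_apply, h1, h2]
        have e2 : (fun ω => iB (X₁ ω)) = (X₁ ⁻¹' B).indicator (1 : Ω → ℝ) := by
          funext ω; by_cases h1 : X₁ ω ∈ B <;> simp [hiB, Set.indicator_apply, h1]
        have e3 : (fun ω => iA (X₂ ω)) = (X₂ ⁻¹' A).indicator (1 : Ω → ℝ) := by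
          funext ω; by_cases h2 : X₂ ω ∈ A <;> simp [hiA, Set.indicator_apply, h2]
        rw [covi, e1, e2, e3, integral_indicator_one ((hX₁m hB).inter (hX₂m hA)),
          integral_indicator_one (hX₁m hB), integral_indicator_one (hX₂m hA)]; rfl
      have hid : ∀ S : Set ℝ, MeasurableSet S → μ (X₂ ⁻¹' S) = μ (X₁ ⁻¹' S) := fun S hS => by
        rw [← Measure.map_apply hX₂m hS, ← hident, Measure.map_apply hX₁m hS]
      rw [eAB, eBA, Set.inter_comm (X₁ ⁻¹' B)] at hb0
      -- hb0 is now a real equation; turn into the measure equation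
      rw [Measure.add_apply, Measure.smul_apply, Measure.smul_apply,
        Measure.map_apply hpair₁ (hA.prod hB), Measure.map_apply hpair₂ (hA.prod hB),
        Measure.prod_prod, Measure.map_apply hX₁m hA, Measure.map_apply hX₂m hB,
        Set.mk_preimage_prod, Set.mk_preimage_prod]
      simp only [smul_eq_mul]
      have hfin1 : μ (X₁ ⁻¹' A ∩ X₂ ⁻¹' B) ≠ ⊤ := measure_ne_top μ _
      have hfin2 : μ (X₂ ⁻¹' A ∩ X₁ ⁻¹' B) ≠ ⊤ := measure_ne_top μ _
      refine (ENNReal.toReal_eq_toReal_iff' ?_ ?_).mp ?_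
      · exact ENNReal.add_ne_top.mpr
          ⟨ENNReal.mul_ne_top (by simp) hfin1, ENNReal.mul_ne_top (by simp) hfin2⟩
      · exact ENNReal.mul_ne_top (measure_ne_top μ _) (measure_ne_top μ _)
      · rw [ENNReal.toReal_add (ENNReal.mul_ne_top (by simp) hfin1)
            (ENNReal.mul_ne_top (by simp) hfin2),
          ENNReal.toReal_mul, ENNReal.toReal_mul, ENNReal.toReal_mul, ENNReal.toReal_inv]
        have hq : μ (X₂ ⁻¹' A) = μ (X₁ ⁻¹' A) := hid A hA
        have hp : μ (X₁ ⁻¹' B) = μ (X₂ ⁻¹' B) := (hid B hB).symm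
        rw [hq, hp] at hb0
        simp only [ENNReal.toReal_ofNat]
        linarith [hb0]
    · rw [Measure.add_apply, Measure.smul_apply, Measure.smul_apply,
        measure_univ, measure_univ, measure_univ]
      simp [ENNReal.inv_two_add_inv_two]
  · intro hM
    constructor
    · have h0 : cov μ (id ∘ X₁) (id ∘ X₂) = 0 :=
        cov_comp_eq_zero_of_mix hX₁m hX₂m hident hM measurable_id
          (by simpa using hX₁2) (by simpa using hX₂2)
      have h0' : cov μ X₁ X₂ = 0 := h0
      unfold corr
      rw [h0', zero_div]
    · intro g hg
      obtain ⟨hgm, hg1, hg2, -, -⟩ := hg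
      have h0 : cov μ (g ∘ X₁) (g ∘ X₂) = 0 :=
        cov_comp_eq_zero_of_mix hX₁m hX₂m hident hM hgm hg1 hg2
      unfold corr
      rw [h0, zero_div]
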